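/- Fix a seed r and run the CGK decoding process on input a ∈ {0,1}^{1.5L}: maintain a pointer i starting at 1; at step t (for t = 1,…,1.5L), if i ≤ L and position x_i is unassigned, assign x_i := a_t and record π(i) := t; then advance i according to a rule depending only on r and the current value x_i. Then the map π, from the set K ⊆ [L] of assigned indices to [1.5L], is injective, and each x_j for j ∈ K equals a_{π(j)}. Consequently, if a is uniform on {0,1}^{1.5L} and unassigned positions of x are filled with fresh independent uniform bits, then x is uniform on {0,1}^L. -/

import Mathlib

open Finset
open scoped ENNReal

/-- State of the CGK decoding process after `t` steps: the pointer (starting at `1`) and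
the partial assignment of the output string (`none` = unassigned).  `L` is the output
length, `adv t v` (derived from the seed `r`) tells whether the pointer advances at
step `t` when the current symbol is `v`, and `a` is the input string. -/
def cgkState (L : ℕ) (adv : ℕ → Bool → Bool) (a : ℕ → Bool) :
    ℕ → ℕ × (ℕ → Option Bool)
  | 0 => (1, fun _ => none)
  | t + 1 =>
    let s := cgkState L adv a t
    let i := s.1
    let x := s.2
    if i ≤ L then
      match x i with
      | none => (i + (if adv t (a t) then 1 else 0),
                 Function.update x i (some (a t)))
      | some v => (i + (if adv t v then 1 else 0), x)
    else (i, x)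

namespace CGK

variable (L : ℕ) (adv : ℕ → Bool → Bool)

/-- trajectory driven by a value function `Y` -/
def T (Y : ℕ → Bool) : ℕ → ℕ
  | 0 => 1
  | t + 1 => let i := T Y t; if i ≤ L then i + (if adv t (Y i) then 1 else 0) else i

variable (a Y : ℕ → Bool)

lemma one_le_fst : ∀ t, 1 ≤ (cgkState L adv a t).1 := by
  intro t
  induction t with
  | zero => simp [cgkState]
  | succ t ih =>
    simp only [cgkState]
    split
    · rcases h : (cgkState L adv a t).2 (cgkState L adv a t).1 with _ | v <;> simp [h] <;> omega
    · exact ih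

lemma one_le_T : ∀ t, 1 ≤ T L adv Y t := by
  intro t
  induction t with
  | zero => simp [T]
  | succ t ih => simp only [T]; split <;> omega

lemma persist {j : ℕ} {v : Bool} {t : ℕ} (h : (cgkState L adv a t).2 j = some v) :
    ∀ t', t ≤ t' → (cgkState L adv a t').2 j = some v := by
  intro t' ht'
  induction t' with
  | zero =>
    have ht0 : t = 0 := by omega
    subst ht0; exact h
  | succ u ih =>
    rcases Nat.lt_or_ge t (u+1) with hu | hu
    · have hx : (cgkState L adv a u).2 j = some v := ih (by omega)
      simp only [cgkState]
      split
      · rcases hc : (cgkState L adv a u).2 (cgkState L adv a u).1 with _ | w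
        · simp only [Function.update]
          split
          · next he => rw [he] at hx; rw [hx] at hc; exact absurd hc (by simp)
          · exact hx
        · exact hx
      · exact hx
    · have : t = u + 1 := by omega
      rw [← this]; exact h

lemma assigned_of_visit {s j : ℕ} (hij : (cgkState L adv a s).1 = j) (hjL : j ≤ L) :
    ∃ v, (cgkState L adv a (s+1)).2 j = some v := by
  simp only [cgkState]
  rw [hij]
  rw [if_pos hjL]
  rcases hc : (cgkState L adv a s).2 j with _ | w
  · exact ⟨a s, by simp [Function.update]⟩
  · exact ⟨w, hc⟩

lemma isSome_iff_visited (t j : ℕ) :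
    ((cgkState L adv a t).2 j).isSome ↔ ∃ s < t, (cgkState L adv a s).1 = j ∧ j ≤ L := by
  induction t with
  | zero => simp [cgkState]
  | succ u ih =>
    constructor
    · intro h
      by_cases hu : ((cgkState L adv a u).2 j).isSome
      · obtain ⟨s, hs, h1, h2⟩ := ih.1 hu
        exact ⟨s, by omega, h1, h2⟩
      · -- assignment happened at step u
        have : (cgkState L adv a u).1 = j ∧ j ≤ L := by
          by_contra hcon
          apply hu
          revert h
          simp only [cgkState]
          split
          · rcases hc : (cgkState L adv a u).2 (cgkState L adv a u).1 with _ | w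
            · simp only [Function.update]
              intro h
              split at h
              · next he =>
                exfalso; exact hcon ⟨he.symm ▸ rfl, by next hle => exact he ▸ hle⟩
              · simp [h]
            · intro h; simp [h]
          · intro h; simp [h]
        exact ⟨u, by omega, this⟩
    · rintro ⟨s, hs, h1, h2⟩
      rcases Nat.lt_or_ge s u with hsu | hsu
      · have := ih.2 ⟨s, hsu, h1, h2⟩
        obtain ⟨v, hv⟩ := Option.isSome_iff_exists.1 this
        exact Option.isSome_iff_exists.2 ⟨v, persist L adv a hv (u+1) (by omega)⟩
      · have hseq : s = u := by omega
        subst hseq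
        obtain ⟨v, hv⟩ := assigned_of_visit L adv a h1 h2
        simp [hv]


lemma step_fst (t : ℕ) : (cgkState L adv a (t+1)).1 =
    if (cgkState L adv a t).1 ≤ L then
      (cgkState L adv a t).1 +
        (if adv t (((cgkState L adv a t).2 ((cgkState L adv a t).1)).getD (a t)) then 1 else 0)
    else (cgkState L adv a t).1 := by
  simp only [cgkState]
  split
  · rcases hc : (cgkState L adv a t).2 (cgkState L adv a t).1 with _ | w <;> simp [hc]
  · rfl

lemma step_snd (t : ℕ) : (cgkState L adv a (t+1)).2 =
    if (cgkState L adv a t).1 ≤ L ∧ (cgkState L adv a t).2 ((cgkState L adv a t).1) = none then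
      Function.update (cgkState L adv a t).2 ((cgkState L adv a t).1) (some (a t))
    else (cgkState L adv a t).2 := by
  simp only [cgkState]
  split
  · next hle =>
    rcases hc : (cgkState L adv a t).2 (cgkState L adv a t).1 with _ | w <;>
      simp [hc, hle]
  · next hle => simp [hle]

lemma traj_eq {m : ℕ} (hY : ∀ j v, (cgkState L adv a m).2 j = some v → Y j = v) :
    ∀ t, t ≤ m → (cgkState L adv a t).1 = T L adv Y t := by
  intro t
  induction t with
  | zero => intro _; rfl
  | succ u ih =>
    intro hu
    have hiu := ih (by omega)
    rw [step_fst]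
    simp only [T, ← hiu]
    split
    · next hle =>
      have hval : ((cgkState L adv a u).2 ((cgkState L adv a u).1)).getD (a u)
          = Y ((cgkState L adv a u).1) := by
        rcases hc : (cgkState L adv a u).2 (cgkState L adv a u).1 with _ | w
        · have h1 : (cgkState L adv a (u+1)).2 ((cgkState L adv a u).1) = some (a u) := by
            rw [step_snd, if_pos ⟨hle, hc⟩]; simp [Function.update]
          have h2 := persist L adv a h1 m (by omega)
          rw [hY _ _ h2]; rfl
        · have h2 := persist L adv a hc m (by omega)
          rw [hY _ _ h2]; rfl
      rw [hval]
    · rfl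


/-- input string reconstructed from target values `Y` and free bits `c` -/
def aOf (Y c : ℕ → Bool) (t : ℕ) : Bool :=
  if T L adv Y t ≤ L ∧ ∀ s < t, T L adv Y s ≠ T L adv Y t then Y (T L adv Y t) else c t

open Classical in
lemma run_aOf (c : ℕ → Bool) : ∀ t,
    (cgkState L adv (aOf L adv Y c) t).1 = T L adv Y t ∧
    ∀ j, (cgkState L adv (aOf L adv Y c) t).2 j =
      if (∃ s, s < t ∧ T L adv Y s = j) ∧ j ≤ L then some (Y j) else none := by
  intro t
  induction t with
  | zero =>
    constructor
    · rfl
    · intro j; simp [cgkState]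
  | succ u ih =>
    obtain ⟨ih1, ih2⟩ := ih
    have hval : T L adv Y u ≤ L →
        ((cgkState L adv (aOf L adv Y c) u).2 (T L adv Y u)).getD (aOf L adv Y c u)
          = Y (T L adv Y u) := by
      intro hle
      rw [ih2]
      by_cases hv : (∃ s, s < u ∧ T L adv Y s = T L adv Y u)
      · rw [if_pos ⟨hv, hle⟩]; rfl
      · rw [if_neg (fun h => hv h.1)]
        simp only [Option.getD_none, aOf]
        rw [if_pos ⟨hle, by push_neg at hv; intro s hs; exact hv s hs⟩]
    constructor
    · rw [step_fst, ih1]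
      simp only [T]
      split
      · next hle => rw [hval hle]
      · rfl
    · intro j
      rw [step_snd, ih1]
      have hxu : (cgkState L adv (aOf L adv Y c) u).2 (T L adv Y u) = none
          ↔ ¬((∃ s, s < u ∧ T L adv Y s = T L adv Y u) ∧ T L adv Y u ≤ L) := by
        rw [ih2]; split
        · next h => simp [h]
        · next h => simp [h]
      by_cases hC : T L adv Y u ≤ L ∧ ∀ s < u, T L adv Y s ≠ T L adv Y u
      · have hcond : T L adv Y u ≤ L ∧
            (cgkState L adv (aOf L adv Y c) u).2 (T L adv Y u) = none := by
          refine ⟨hC.1, hxu.2 ?_⟩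
          rintro ⟨⟨s, hs, he⟩, -⟩; exact hC.2 s hs he
        rw [if_pos hcond]
        have hA : aOf L adv Y c u = Y (T L adv Y u) := by rw [aOf, if_pos hC]
        by_cases hj : j = T L adv Y u
        · subst hj
          rw [Function.update_self, hA, if_pos ⟨⟨u, by omega, rfl⟩, hC.1⟩]
        · rw [Function.update_of_ne hj, ih2]
          have hiff : ((∃ s, s < u ∧ T L adv Y s = j) ∧ j ≤ L)
              ↔ ((∃ s, s < u + 1 ∧ T L adv Y s = j) ∧ j ≤ L) := by
            constructor
            · rintro ⟨⟨s, hs, he⟩, hjL⟩; exact ⟨⟨s, by omega, he⟩, hjL⟩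
            · rintro ⟨⟨s, hs, he⟩, hjL⟩
              rcases Nat.lt_or_ge s u with h | h
              · exact ⟨⟨s, h, he⟩, hjL⟩
              · exfalso; apply hj; rw [← he]; congr 1; omega
          rw [if_congr hiff rfl rfl]
      · have hcond : ¬(T L adv Y u ≤ L ∧
            (cgkState L adv (aOf L adv Y c) u).2 (T L adv Y u) = none) := by
          rintro ⟨h1, h2⟩
          have hne := hxu.1 h2
          push_neg at hC
          obtain ⟨s, hs, he⟩ := hC h1
          exact hne ⟨⟨s, hs, he⟩, h1⟩
        rw [if_neg hcond, ih2]
        have hiff : ((∃ s, s < u ∧ T L adv Y s = j) ∧ j ≤ L)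
            ↔ ((∃ s, s < u + 1 ∧ T L adv Y s = j) ∧ j ≤ L) := by
          constructor
          · rintro ⟨⟨s, hs, he⟩, hjL⟩; exact ⟨⟨s, by omega, he⟩, hjL⟩
          · rintro ⟨⟨s, hs, he⟩, hjL⟩
            rcases Nat.lt_or_ge s u with h | h
            · exact ⟨⟨s, h, he⟩, hjL⟩
            · have hsu : s = u := by omega
              subst hsu
              subst he
              push_neg at hC
              obtain ⟨s', hs', he'⟩ := hC hjL
              exact ⟨⟨s', hs', he'⟩, hjL⟩
        rw [if_congr hiff rfl rfl]


lemma main_assign (m : ℕ) : ∀ j, ((cgkState L adv a m).2 j).isSome →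
    ∃ hex : ∃ s, s < m ∧ (cgkState L adv a s).1 = j ∧ j ≤ L,
      Nat.find hex < m ∧ (cgkState L adv a (Nat.find hex)).1 = j ∧
      (cgkState L adv a m).2 j = some (a (Nat.find hex)) := by
  intro j hj
  have hex : ∃ s, s < m ∧ (cgkState L adv a s).1 = j ∧ j ≤ L := by
    obtain ⟨s, hs, h1, h2⟩ := (isSome_iff_visited L adv a m j).1 hj
    exact ⟨s, hs, h1, h2⟩
  obtain ⟨htm, hti, htL⟩ := Nat.find_spec hex
  refine ⟨hex, htm, hti, ?_⟩
  have hnone : (cgkState L adv a (Nat.find hex)).2 j = none := by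
    rw [← Option.not_isSome_iff_eq_none]
    rw [isSome_iff_visited]
    rintro ⟨s, hs, h1, h2⟩
    exact Nat.find_min hex hs ⟨by omega, h1, h2⟩
  have hstep : (cgkState L adv a (Nat.find hex + 1)).2 j = some (a (Nat.find hex)) := by
    rw [step_snd, hti, if_pos ⟨htL, hnone⟩, Function.update_self]
  exact persist L adv a hstep m (by omega)

lemma part1 (m : ℕ) :
    ∃ π : ℕ → ℕ,
      Set.InjOn π {j | ((cgkState L adv a m).2 j).isSome} ∧
      ∀ j, ((cgkState L adv a m).2 j).isSome →
        π j < m ∧ (cgkState L adv a m).2 j = some (a (π j)) := by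
  refine ⟨fun j => if h : ∃ s, s < m ∧ (cgkState L adv a s).1 = j ∧ j ≤ L
      then Nat.find h else 0, ?_, ?_⟩
  · intro j hj j' hj' heq
    obtain ⟨hex, h1, h2, h3⟩ := main_assign L adv a m j hj
    obtain ⟨hex', h1', h2', h3'⟩ := main_assign L adv a m j' hj'
    simp only [dif_pos hex, dif_pos hex'] at heq
    rw [← h2, ← h2', heq]
  · intro j hj
    obtain ⟨hex, h1, h2, h3⟩ := main_assign L adv a m j hj
    simp only [dif_pos hex]
    exact ⟨h1, h3⟩


lemma state_congr (a' : ℕ → Bool) :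
    ∀ t, (∀ s < t, a s = a' s) → cgkState L adv a t = cgkState L adv a' t := by
  intro t
  induction t with
  | zero => intro _; rfl
  | succ u ih =>
    intro h
    have he := ih (fun s hs => h s (by omega))
    simp only [cgkState, he, h u (by omega)]

end CGK

def CGK.ext {m : ℕ} (c : Fin m → Bool) : ℕ → Bool :=
  fun t => if h : t < m then c ⟨t, h⟩ else false

def CGK.yext (L : ℕ) (y : Fin L → Bool) : ℕ → Bool :=
  fun i => if h : i - 1 < L then y ⟨i - 1, h⟩ else false

def CGK.Phi (L m : ℕ) (adv : ℕ → Bool → Bool) (p : (Fin m → Bool) × (Fin L → Bool)) :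
    (Fin m → Bool) × (Fin L → Bool) :=
  ⟨fun t =>
    if h : (cgkState L adv (CGK.ext p.1) t.1).1 ≤ L ∧
        (cgkState L adv (CGK.ext p.1) t.1).2 ((cgkState L adv (CGK.ext p.1) t.1).1) = none
    then p.2 ⟨(cgkState L adv (CGK.ext p.1) t.1).1 - 1, by
      have := CGK.one_le_fst L adv (CGK.ext p.1) t.1; omega⟩
    else p.1 t,
   fun j => ((cgkState L adv (CGK.ext p.1) m).2 (j.1 + 1)).getD (p.2 j)⟩

open Classical in
def CGK.Psi (L m : ℕ) (adv : ℕ → Bool → Bool) (q : (Fin m → Bool) × (Fin L → Bool)) :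
    (Fin m → Bool) × (Fin L → Bool) :=
  ⟨fun t => CGK.aOf L adv (CGK.yext L q.2) (CGK.ext q.1) t.1,
   fun j => if h : ∃ s, s < m ∧ CGK.T L adv (CGK.yext L q.2) s = j.1 + 1
     then CGK.ext q.1 (Nat.find h) else q.2 j⟩

namespace CGK

lemma Psi_Phi (L m : ℕ) (adv : ℕ → Bool → Bool) (p : (Fin m → Bool) × (Fin L → Bool)) :
    Psi L m adv (Phi L m adv p) = p := by
  classical
  set a := ext p.1 with ha
  set Y := yext L (Phi L m adv p).2 with hY
  have hYv : ∀ j v, (cgkState L adv a m).2 j = some v → Y j = v := by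
    intro j v hjv
    have hsome : ((cgkState L adv a m).2 j).isSome := by simp [hjv]
    obtain ⟨s, hs, h1, h2⟩ := (isSome_iff_visited L adv a m j).1 hsome
    have hj1 : 1 ≤ j := h1 ▸ one_le_fst L adv a s
    have hjL : j - 1 < L := by omega
    rw [hY, yext]
    simp only [dif_pos hjL]
    show ((cgkState L adv (ext p.1) m).2 ((j - 1) + 1)).getD _ = v
    have hjj : j - 1 + 1 = j := by omega
    rw [hjj, ← ha, hjv]
    rfl
  have htraj : ∀ t, t ≤ m → (cgkState L adv a t).1 = T L adv Y t :=
    traj_eq L adv a Y hYv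
  have hfresh : ∀ t, t < m →
      (((cgkState L adv a t).1 ≤ L ∧
          (cgkState L adv a t).2 ((cgkState L adv a t).1) = none)
        ↔ (T L adv Y t ≤ L ∧ ∀ s < t, T L adv Y s ≠ T L adv Y t)) := by
    intro t htm
    constructor
    · rintro ⟨h1, h2⟩
      refine ⟨by rw [← htraj t (by omega)]; exact h1, fun s hs hne => ?_⟩
      rw [← htraj s (by omega), ← htraj t (by omega)] at hne
      have hv : ((cgkState L adv a t).2 ((cgkState L adv a t).1)).isSome :=
        (isSome_iff_visited L adv a t _).2 ⟨s, hs, hne, h1⟩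
      rw [h2] at hv; simp at hv
    · rintro ⟨h1, h2⟩
      refine ⟨by rw [htraj t (by omega)]; exact h1, ?_⟩
      rw [← Option.not_isSome_iff_eq_none, isSome_iff_visited]
      rintro ⟨s, hs, he, -⟩
      apply h2 s hs
      rw [← htraj s (by omega), ← htraj t (by omega)]
      exact he
  have hassign : ∀ t : ℕ, t < m →
      (T L adv Y t ≤ L ∧ ∀ s < t, T L adv Y s ≠ T L adv Y t) →
      Y (T L adv Y t) = a t := by
    intro t htm hC
    obtain ⟨h1, h2⟩ := (hfresh t htm).2 hC
    have hstep : (cgkState L adv a (t+1)).2 ((cgkState L adv a t).1) = some (a t) := by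
      rw [step_snd, if_pos ⟨h1, h2⟩, Function.update_self]
    have := persist L adv a hstep m (by omega)
    have hYt := hYv _ _ this
    rw [← htraj t (by omega)]
    exact hYt
  refine Prod.ext ?_ ?_
  · funext t
    show aOf L adv Y (ext (Phi L m adv p).1) t.1 = p.1 t
    by_cases hC : T L adv Y t.1 ≤ L ∧ ∀ s < t.1, T L adv Y s ≠ T L adv Y t.1
    · rw [aOf, if_pos hC, hassign t.1 t.2 hC, ha, ext]
      simp [t.2]
    · rw [aOf, if_neg hC, ext]
      simp only [t.2, dif_pos]
      show (Phi L m adv p).1 ⟨t.1, t.2⟩ = p.1 t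
      rw [Phi]
      simp only [Fin.eta]
      rw [dif_neg]
      intro hcond
      exact hC ((hfresh t.1 t.2).1 hcond)
  · funext j
    show (if h : ∃ s, s < m ∧ T L adv Y s = j.1 + 1
        then ext (Phi L m adv p).1 (Nat.find h) else (Phi L m adv p).2 j) = p.2 j
    by_cases hE : ∃ s, s < m ∧ T L adv Y s = j.1 + 1
    · rw [dif_pos hE]
      obtain ⟨hs0m, hs0T⟩ := Nat.find_spec hE
      have hfr : ∀ s < Nat.find hE, T L adv Y s ≠ T L adv Y (Nat.find hE) := by
        intro s hs hne
        exact Nat.find_min hE hs ⟨by omega, by rw [← hne] at hs0T; exact hs0T⟩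
      have hjL : j.1 + 1 ≤ L := j.2
      have hcond := (hfresh (Nat.find hE) hs0m).2 ⟨by rw [hs0T]; exact hjL, hfr⟩
      rw [ext]
      simp only [dif_pos hs0m]
      show (Phi L m adv p).1 ⟨Nat.find hE, hs0m⟩ = p.2 j
      rw [Phi]
      simp only [dif_pos hcond]
      have hidx : (cgkState L adv (ext p.1) (Nat.find hE)).1 - 1 = j.1 := by
        rw [← ha, htraj (Nat.find hE) (by omega), hs0T]
        omega
      exact (dif_pos hcond).trans (congrArg p.2 (Fin.ext hidx : (⟨(cgkState L adv (ext p.1) (Nat.find hE)).1 - 1, by have := j.2; omega⟩ : Fin L) = j))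
    · rw [dif_neg hE]
      show ((cgkState L adv (ext p.1) m).2 (j.1 + 1)).getD (p.2 j) = p.2 j
      have hnone : (cgkState L adv (ext p.1) m).2 (j.1 + 1) = none := by
        rw [← ha, ← Option.not_isSome_iff_eq_none, isSome_iff_visited]
        rintro ⟨s, hs, h1, h2⟩
        exact hE ⟨s, hs, by rw [← htraj s (by omega)]; exact h1⟩
      rw [← ha] at hnone ⊢
      rw [hnone]
      rfl

lemma Phi_Psi (L m : ℕ) (adv : ℕ → Bool → Bool) (q : (Fin m → Bool) × (Fin L → Bool)) :
    Phi L m adv (Psi L m adv q) = q := by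
  classical
  have hag : ∀ t, t ≤ m →
      cgkState L adv (ext (Psi L m adv q).1) t
        = cgkState L adv (aOf L adv (yext L q.2) (ext q.1)) t := by
    intro t ht
    apply state_congr
    intro s hs
    show ext (Psi L m adv q).1 s = aOf L adv (yext L q.2) (ext q.1) s
    rw [ext]
    simp only [dif_pos (show s < m by omega)]
    rfl
  refine Prod.ext ?_ ?_
  · funext t
    simp only [Phi]
    simp only [hag t.1 (Nat.le_of_lt t.2)]
    obtain ⟨hf, hx⟩ := run_aOf L adv (yext L q.2) (ext q.1) t.1
    by_cases hC : T L adv (yext L q.2) t.1 ≤ L ∧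
        ∀ s < t.1, T L adv (yext L q.2) s ≠ T L adv (yext L q.2) t.1
    · have hnone : (cgkState L adv (aOf L adv (yext L q.2) (ext q.1)) t.1).2
          ((cgkState L adv (aOf L adv (yext L q.2) (ext q.1)) t.1).1) = none := by
        rw [hf, hx, if_neg]
        rintro ⟨⟨s, hs, he⟩, -⟩
        exact hC.2 s hs he
      rw [dif_pos ⟨by rw [hf]; exact hC.1, hnone⟩]
      simp only [Psi]
      simp only [hf]
      have h11 : (T L adv (yext L q.2) t.1 - 1) + 1 = T L adv (yext L q.2) t.1 := by
        have := one_le_T L adv (yext L q.2) t.1; omega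
      simp only [h11]
      have hEx : ∃ s, s < m ∧ T L adv (yext L q.2) s = T L adv (yext L q.2) t.1 :=
        ⟨t.1, t.2, rfl⟩
      rw [dif_pos hEx]
      have hft : Nat.find hEx = t.1 := by
        refine le_antisymm (Nat.find_le ⟨t.2, rfl⟩) ?_
        by_contra h
        push_neg at h
        exact hC.2 (Nat.find hEx) h (Nat.find_spec hEx).2
      rw [hft, ext]
      simp only [dif_pos t.2, Fin.eta]
    · have hncond : ¬(T L adv (yext L q.2) t.1 ≤ L ∧
          (cgkState L adv (aOf L adv (yext L q.2) (ext q.1)) t.1).2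
            (T L adv (yext L q.2) t.1) = none) := by
        rintro ⟨h1, h2⟩
        rw [hx] at h2
        push_neg at hC
        obtain ⟨s, hs, he⟩ := hC h1
        rw [if_pos ⟨⟨s, hs, he⟩, h1⟩] at h2
        simp at h2
      rw [dif_neg (by rw [hf]; exact hncond)]
      simp only [Psi]
      rw [aOf, if_neg hC, ext]
      simp only [dif_pos t.2, Fin.eta]
  · funext j
    simp only [Phi]
    simp only [hag m le_rfl]
    obtain ⟨hf, hx⟩ := run_aOf L adv (yext L q.2) (ext q.1) m
    rw [hx]
    by_cases hE : ∃ s, s < m ∧ T L adv (yext L q.2) s = j.1 + 1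
    · rw [if_pos ⟨hE, j.2⟩]
      show yext L q.2 (j.1 + 1) = q.2 j
      rw [yext]
      have hlt : j.1 + 1 - 1 < L := by have := j.2; omega
      simp only [dif_pos hlt]
      have : (⟨j.1 + 1 - 1, hlt⟩ : Fin L) = j := by apply Fin.ext; simp
      rw [this]
    · rw [if_neg (fun h => hE h.1)]
      simp only [Option.getD_none, Psi]
      rw [dif_neg hE]

end CGK



lemma pmf_map_equiv {α β : Type*} [Fintype α] [Nonempty α] [Fintype β] [Nonempty β]
    (e : α ≃ β) : PMF.map e (PMF.uniformOfFintype α) = PMF.uniformOfFintype β := by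
  ext b
  rw [PMF.map_apply, PMF.uniformOfFintype_apply, tsum_eq_single (e.symm b)]
  · simp [PMF.uniformOfFintype_apply, Fintype.card_congr e]
  · intro a ha
    rw [if_neg]
    intro hb
    exact ha (by rw [hb, Equiv.symm_apply_apply])

lemma pmf_map_snd {α β : Type*} [Fintype α] [Nonempty α] [Fintype β] [Nonempty β] :
    PMF.map Prod.snd (PMF.uniformOfFintype (α × β)) = PMF.uniformOfFintype β := by
  classical
  ext b
  rw [PMF.map_apply, PMF.uniformOfFintype_apply, tsum_fintype]
  simp only [PMF.uniformOfFintype_apply]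
  rw [Fintype.sum_prod_type]
  have h1 : ∀ a : α, (∑ b' : β, if b = b' then (Fintype.card (α × β) : ℝ≥0∞)⁻¹ else 0)
      = (Fintype.card (α × β) : ℝ≥0∞)⁻¹ := by
    intro a
    rw [Finset.sum_ite_eq Finset.univ b (fun _ => (Fintype.card (α × β) : ℝ≥0∞)⁻¹)]
    simp
  simp only [h1, Finset.sum_const, Finset.card_univ, nsmul_eq_mul, Fintype.card_prod]
  have hα : (Fintype.card α : ℝ≥0∞) ≠ 0 := by
    simp [Fintype.card_ne_zero]
  have hβ : (Fintype.card β : ℝ≥0∞) ≠ 0 := by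
    simp [Fintype.card_ne_zero]
  rw [Nat.cast_mul, ENNReal.mul_inv (Or.inl hα) (Or.inl (ENNReal.natCast_ne_top _)),
    Finset.sum_ite_eq Finset.univ b
      (fun _ => (Fintype.card α : ℝ≥0∞)⁻¹ * (Fintype.card β : ℝ≥0∞)⁻¹),
    if_pos (Finset.mem_univ b), ← mul_assoc,
    ENNReal.mul_inv_cancel hα (ENNReal.natCast_ne_top _), one_mul]


/-- The CGK decoding process run for `m` steps assigns each output index at most once,
at the step recorded by an injective map `π` into `[m]`, and the assigned value at
index `j` equals the input bit `a_{π(j)}`.  Consequently, if the input `a` is uniform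
on `{0,1}^m` and the unassigned output positions are filled with fresh independent
uniform bits, the output string (of length `L`, positions `1,…,L`) is uniform on
`{0,1}^L`. -/
theorem cgk_decoding_injective_and_uniform (L m : ℕ) (adv : ℕ → Bool → Bool) :
    (∀ a : ℕ → Bool, ∃ π : ℕ → ℕ,
      Set.InjOn π {j | ((cgkState L adv a m).2 j).isSome} ∧
      ∀ j, ((cgkState L adv a m).2 j).isSome →
        π j < m ∧ (cgkState L adv a m).2 j = some (a (π j))) ∧
    PMF.map
        (fun p : (Fin m → Bool) × (Fin L → Bool) =>
          fun j : Fin L =>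
            ((cgkState L adv
                (fun t => if h : t < m then p.1 ⟨t, h⟩ else false) m).2
              (j.1 + 1)).getD (p.2 j))
        (PMF.uniformOfFintype ((Fin m → Bool) × (Fin L → Bool)))
      = PMF.uniformOfFintype (Fin L → Bool) := by
  constructor
  · intro a
    exact CGK.part1 L adv a m
  · let e : ((Fin m → Bool) × (Fin L → Bool)) ≃ ((Fin m → Bool) × (Fin L → Bool)) :=
      ⟨CGK.Phi L m adv, CGK.Psi L m adv, CGK.Psi_Phi L m adv, CGK.Phi_Psi L m adv⟩
    have hfe : (fun p : (Fin m → Bool) × (Fin L → Bool) =>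
        fun j : Fin L =>
          ((cgkState L adv (fun t => if h : t < m then p.1 ⟨t, h⟩ else false) m).2
            (j.1 + 1)).getD (p.2 j)) = Prod.snd ∘ ⇑e := by
      funext p
      rfl
    rw [hfe, ← PMF.map_comp, pmf_map_equiv e, pmf_map_snd]
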